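/- Let (X, Y, E) be a finite bipartite partial order (x < y iff (x,y) ∈ E), p a probability distribution on X ∪ Y, and f : X ∪ Y → {0,1}. For x with f(x)=1 let q(x) be the total p-mass of points y ∈ Y with f(y)=0 and x < y. If ∑_{x ∈ X : f(x)=1} min(p(x), q(x)) < ε, then there exists a monotone function h on (X,Y,E) with Pr_{z∼p}[f(z) ≠ h(z)] < ε. -/

import Mathlib

open Classical in
/-- Bipartite monotonicity correction: if the total weight of cheaply fixable
violations is below `ε`, then `f` is `ε`-close to a monotone function on the
bipartite partial order `(X, Y, E)`. -/
theorem bipartite_monotone_correction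
    {X Y : Type*} [Fintype X] [Fintype Y] (E : X → Y → Prop)
    (p : X ⊕ Y → ℝ) (hp : ∀ z, 0 ≤ p z) (hsum : ∑ z, p z = 1)
    (f : X ⊕ Y → Bool) (ε : ℝ)
    (q : X → ℝ)
    (hq : ∀ x : X, q x =
      ∑ y : Y, if f (Sum.inr y) = false ∧ E x y then p (Sum.inr y) else 0)
    (hcheap : (∑ x : X, if f (Sum.inl x) = true then min (p (Sum.inl x)) (q x) else 0) < ε) :
    ∃ h : X ⊕ Y → Bool,
      (∀ (x : X) (y : Y), E x y → h (Sum.inl x) ≤ h (Sum.inr y)) ∧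
      (∑ z : X ⊕ Y, if f z ≠ h z then p z else 0) < ε := by
  classical
  set h : X ⊕ Y → Bool := fun z =>
    match z with
    | Sum.inl x => f (Sum.inl x) && decide (q x ≤ p (Sum.inl x))
    | Sum.inr y => f (Sum.inr y) ||
        decide (∃ x, E x y ∧ f (Sum.inl x) = true ∧ q x ≤ p (Sum.inl x)) with hdef
  refine ⟨h, ?_, ?_⟩
  · intro x y hxy
    by_cases hx : h (Sum.inl x) = true
    · have hfx : f (Sum.inl x) = true ∧ q x ≤ p (Sum.inl x) := by
        simpa [hdef] using hx
      have hy : h (Sum.inr y) = true := by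
        simp only [hdef]
        simp only [Bool.or_eq_true, decide_eq_true_eq]
        exact Or.inr ⟨x, hxy, hfx.1, hfx.2⟩
      simp [hx, hy]
    · simp [Bool.eq_false_iff.mpr hx]
  · have key : (∑ z : X ⊕ Y, if f z ≠ h z then p z else 0) ≤
        ∑ x : X, if f (Sum.inl x) = true then min (p (Sum.inl x)) (q x) else 0 := by
      rw [Fintype.sum_sum_type]
      have hX : ∀ x : X, (if f (Sum.inl x) ≠ h (Sum.inl x) then p (Sum.inl x) else 0) =
          (if f (Sum.inl x) = true ∧ p (Sum.inl x) < q x then p (Sum.inl x) else 0) := by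
        intro x
        by_cases hf : f (Sum.inl x) = true
        · by_cases hpq : q x ≤ p (Sum.inl x)
          · simp [hdef, hf, hpq, not_lt.mpr hpq]
          · simp [hdef, hf, hpq, lt_of_not_ge hpq]
        · simp only [Bool.not_eq_true] at hf
          simp [hdef, hf]
      have hY : (∑ y : Y, if f (Sum.inr y) ≠ h (Sum.inr y) then p (Sum.inr y) else 0) ≤
          ∑ x : X, if f (Sum.inl x) = true ∧ q x ≤ p (Sum.inl x) then q x else 0 := by
        have step1 : ∀ y : Y, (if f (Sum.inr y) ≠ h (Sum.inr y) then p (Sum.inr y) else 0) ≤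
            ∑ x : X, if f (Sum.inr y) = false ∧ E x y ∧ f (Sum.inl x) = true ∧
              q x ≤ p (Sum.inl x) then p (Sum.inr y) else 0 := by
          intro y
          by_cases hne : f (Sum.inr y) ≠ h (Sum.inr y)
          · rw [if_pos hne]
            have hfy : f (Sum.inr y) = false := by
              by_contra hc
              simp only [Bool.not_eq_false] at hc
              simp [hdef, hc] at hne
            have hex : ∃ x, E x y ∧ f (Sum.inl x) = true ∧ q x ≤ p (Sum.inl x) := by
              by_contra hc
              simp [hdef, hfy, hc] at hne
            obtain ⟨x0, hx0⟩ := hex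
            calc p (Sum.inr y) =
                (if f (Sum.inr y) = false ∧ E x0 y ∧ f (Sum.inl x0) = true ∧
                  q x0 ≤ p (Sum.inl x0) then p (Sum.inr y) else 0) := by
                  simp [hfy, hx0.1, hx0.2.1, hx0.2.2]
              _ ≤ _ := Finset.single_le_sum (f := fun x => if f (Sum.inr y) = false ∧ E x y ∧
                    f (Sum.inl x) = true ∧ q x ≤ p (Sum.inl x) then p (Sum.inr y) else 0)
                  (fun x _ => by split_ifs; exacts [hp _, le_rfl]) (Finset.mem_univ x0)
          · rw [if_neg hne]
            apply Finset.sum_nonneg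
            intro x _; split_ifs; exacts [hp _, le_rfl]
        calc (∑ y : Y, if f (Sum.inr y) ≠ h (Sum.inr y) then p (Sum.inr y) else 0)
            ≤ ∑ y : Y, ∑ x : X, if f (Sum.inr y) = false ∧ E x y ∧ f (Sum.inl x) = true ∧
                q x ≤ p (Sum.inl x) then p (Sum.inr y) else 0 :=
              Finset.sum_le_sum fun y _ => step1 y
          _ = ∑ x : X, ∑ y : Y, if f (Sum.inr y) = false ∧ E x y ∧ f (Sum.inl x) = true ∧
                q x ≤ p (Sum.inl x) then p (Sum.inr y) else 0 := Finset.sum_comm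
          _ ≤ ∑ x : X, if f (Sum.inl x) = true ∧ q x ≤ p (Sum.inl x) then q x else 0 := by
              apply Finset.sum_le_sum
              intro x _
              by_cases hx : f (Sum.inl x) = true ∧ q x ≤ p (Sum.inl x)
              · rw [if_pos hx]
                calc (∑ y : Y, if f (Sum.inr y) = false ∧ E x y ∧ f (Sum.inl x) = true ∧
                      q x ≤ p (Sum.inl x) then p (Sum.inr y) else 0)
                    ≤ ∑ y : Y, if f (Sum.inr y) = false ∧ E x y then p (Sum.inr y) else 0 := by
                      apply Finset.sum_le_sum
                      intro y _
                      by_cases hc : f (Sum.inr y) = false ∧ E x y ∧ f (Sum.inl x) = true ∧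
                          q x ≤ p (Sum.inl x)
                      · rw [if_pos hc, if_pos ⟨hc.1, hc.2.1⟩]
                      · rw [if_neg hc]
                        split_ifs; exacts [hp _, le_rfl]
                  _ = q x := (hq x).symm
              · rw [if_neg hx]
                apply le_of_eq
                apply Finset.sum_eq_zero
                intro y _
                rw [if_neg (by tauto)]
      calc (∑ x : X, if f (Sum.inl x) ≠ h (Sum.inl x) then p (Sum.inl x) else 0) +
            (∑ y : Y, if f (Sum.inr y) ≠ h (Sum.inr y) then p (Sum.inr y) else 0)
          ≤ (∑ x : X, if f (Sum.inl x) = true ∧ p (Sum.inl x) < q x then p (Sum.inl x) else 0) +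
            (∑ x : X, if f (Sum.inl x) = true ∧ q x ≤ p (Sum.inl x) then q x else 0) :=
            add_le_add (le_of_eq (Finset.sum_congr rfl fun x _ => hX x)) hY
        _ = ∑ x : X, if f (Sum.inl x) = true then min (p (Sum.inl x)) (q x) else 0 := by
            rw [← Finset.sum_add_distrib]
            apply Finset.sum_congr rfl
            intro x _
            by_cases hf : f (Sum.inl x) = true
            · by_cases hpq : q x ≤ p (Sum.inl x)
              · simp [hf, hpq, not_lt.mpr hpq, min_eq_right hpq]
              · simp [hf, hpq, lt_of_not_ge hpq,
                  min_eq_left (le_of_lt (lt_of_not_ge hpq))]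
            · simp [hf]
    exact lt_of_le_of_lt key hcheap
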